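/- Let F be a number field of degree d = [F:ℚ], let Λ_1, …, Λ_n be fractional ideals of F, let D_1, …, D_n be compact subsets of F_∞ = F ⊗_ℚ ℝ, and let ε > 0. Then there exists a constant C > 0 (depending only on the D_i, the Λ_i and ε) such that for all real numbers a_1, …, a_n ≥ ε and every nonzero integral ideal 𝔫 of 𝒪_F, the number of tuples (x_1, …, x_n) ∈ F^n with x_i ∈ a_i·D_i ∩ 𝔫Λ_i for every i (intersections inside F_∞) and (x_1, …, x_n) ≠ (0, …, 0) is at most C · (∏_{i=1}^n a_i^d) / N(𝔫). -/

import Mathlib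

open scoped TensorProduct Pointwise nonZeroDivisors
open NumberField

/-- The scalar action of `ℝ` on `V ⊗[ℚ] ℝ` through the right tensor factor. -/
noncomputable instance tensorRealSMul (V : Type*) [AddCommGroup V] [Module ℚ V] :
    SMul ℝ (V ⊗[ℚ] ℝ) :=
  ⟨fun a x => (TensorProduct.comm ℚ V ℝ).symm (a • TensorProduct.comm ℚ V ℝ x)⟩

/-- The `ℝ`-module structure on `V ⊗[ℚ] ℝ` through the right tensor factor. -/
noncomputable instance tensorRealModule (V : Type*) [AddCommGroup V] [Module ℚ V] :
    Module ℝ (V ⊗[ℚ] ℝ) :=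
  Function.Injective.module ℝ (TensorProduct.comm ℚ V ℝ).toLinearMap.toAddMonoidHom
    (TensorProduct.comm ℚ V ℝ).injective
    (fun _ _ => (TensorProduct.comm ℚ V ℝ).apply_symm_apply _)

/-- The canonical topology on the finite-dimensional real vector space `V ⊗[ℚ] ℝ`
(the unique topology making it a topological `ℝ`-vector space). -/
noncomputable instance tensorRealTopology (V : Type*) [AddCommGroup V] [Module ℚ V] :
    TopologicalSpace (V ⊗[ℚ] ℝ) := moduleTopology ℝ (V ⊗[ℚ] ℝ)

/-- `V ⊗[ℚ] ℝ` is `ℝ`-linearly equivalent to `ℝ ⊗[ℚ] V`. -/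
noncomputable def tensorCommEquiv (V : Type*) [AddCommGroup V] [Module ℚ V] :
    (V ⊗[ℚ] ℝ) ≃ₗ[ℝ] (ℝ ⊗[ℚ] V) where
  toFun := TensorProduct.comm ℚ V ℝ
  invFun := (TensorProduct.comm ℚ V ℝ).symm
  left_inv := fun x => (TensorProduct.comm ℚ V ℝ).symm_apply_apply x
  right_inv := fun x => (TensorProduct.comm ℚ V ℝ).apply_symm_apply x
  map_add' := map_add _
  map_smul' := fun _ _ => (TensorProduct.comm ℚ V ℝ).apply_symm_apply _

instance tensorRealIsModuleTopology (V : Type*) [AddCommGroup V] [Module ℚ V] :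
    IsModuleTopology ℝ (V ⊗[ℚ] ℝ) := ⟨rfl⟩
/-- Counting separated points with bounded coordinates. -/
lemma aux_grid_count {ι : Type*} [Fintype ι] [DecidableEq ι] {α : Type*} (S : Set α)
    (f : α → ι → ℝ) (δ L : ℝ) (hδ : 1 ≤ δ) (hL : 0 ≤ L)
    (hbound : ∀ x ∈ S, ∀ k, |f x k| ≤ L)
    (hsep : ∀ x ∈ S, ∀ y ∈ S, x ≠ y → ∃ k, δ ≤ |f x k - f y k|) :
    S.Finite ∧ (S.ncard : ℝ) ≤ (2 * L / δ + 2) ^ Fintype.card ι := by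
  have hδ0 : (0:ℝ) < δ := lt_of_lt_of_le one_pos hδ
  set M : ℤ := ⌊L / δ⌋ with hM
  have hM0 : (0:ℤ) ≤ M := Int.floor_nonneg.2 (div_nonneg hL hδ0.le)
  set g : α → ι → ℤ := fun x k => ⌊f x k / δ⌋ with hg
  have hginj : Set.InjOn g S := by
    intro x hx y hy hxy
    by_contra hne
    obtain ⟨k, hk⟩ := hsep x hx y hy hne
    have h1 : ⌊f x k / δ⌋ = ⌊f y k / δ⌋ := congrFun hxy k
    have h2 : |f x k / δ - f y k / δ| < 1 := Int.abs_sub_lt_one_of_floor_eq_floor h1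
    rw [div_sub_div_same, abs_div, abs_of_pos hδ0, div_lt_one hδ0] at h2
    exact absurd hk (not_le.2 h2)
  set T : Finset (ι → ℤ) := Fintype.piFinset fun _ => Finset.Icc (-(M + 1)) M with hT
  have hmem : ∀ x ∈ S, g x ∈ T := by
    intro x hx
    rw [hT, Fintype.mem_piFinset]
    intro k
    rw [Finset.mem_Icc]
    constructor
    · rw [Int.le_floor]
      push_cast
      have h5 : -L / δ ≤ f x k / δ := by
        gcongr
        exact (abs_le.1 (hbound x hx k)).1
      have h6 := Int.lt_floor_add_one (L / δ)
      have hnd : -L / δ = -(L / δ) := by ring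
      linarith
    · refine Int.floor_le_floor ?_
      gcongr
      exact (abs_le.1 (hbound x hx k)).2
  have hsub : g '' S ⊆ (T : Set (ι → ℤ)) := by
    rintro _ ⟨x, hx, rfl⟩; exact hmem x hx
  have hfin : S.Finite := Set.Finite.of_finite_image ((T.finite_toSet).subset hsub) hginj
  refine ⟨hfin, ?_⟩
  have h1 : S.ncard = (g '' S).ncard := (Set.ncard_image_of_injOn hginj).symm
  have h2 : (g '' S).ncard ≤ T.card := by
    rw [← Set.ncard_coe_finset]
    exact Set.ncard_le_ncard hsub T.finite_toSet
  have h3 : (T.card : ℝ) ≤ (2 * L / δ + 2) ^ Fintype.card ι := by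
    rw [hT, Fintype.card_piFinset]
    have hcard : ∀ k : ι, ((Finset.Icc (-(M + 1)) M).card : ℝ) ≤ 2 * L / δ + 2 := by
      intro k
      rw [Int.card_Icc]
      have : (M + 1 - -(M + 1)) = 2 * M + 2 := by ring
      rw [this]
      have h4' : ((2 * M + 2).toNat : ℤ) = 2 * M + 2 := Int.toNat_of_nonneg (by omega)
      have h4 : ((2 * M + 2).toNat : ℝ) = ((2 * M + 2 : ℤ) : ℝ) := by exact_mod_cast h4'
      rw [h4]
      push_cast
      have h7 : (M : ℝ) ≤ L / δ := Int.floor_le (L / δ)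
      have h8 : 2 * L / δ = 2 * (L / δ) := by ring
      linarith
    calc ((∏ _k : ι, (Finset.Icc (-(M + 1)) M).card : ℕ) : ℝ)
        = ∏ _k : ι, ((Finset.Icc (-(M + 1)) M).card : ℝ) := by push_cast; ring
      _ ≤ ∏ _k : ι, (2 * L / δ + 2) := Finset.prod_le_prod (fun _ _ => by positivity) (fun k _ => hcard k)
      _ = (2 * L / δ + 2) ^ Fintype.card ι := by rw [Finset.prod_const, Finset.card_univ]
  calc (S.ncard : ℝ) = ((g '' S).ncard : ℝ) := by rw [h1]
    _ ≤ T.card := Nat.cast_le.2 h2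
    _ ≤ _ := h3

lemma aux_pi_card {n : ℕ} {α : Type*} (S : Fin n → Set α) (h : ∀ i, (S i).Finite) :
    (Set.univ.pi S).Finite ∧ ((Set.univ.pi S).ncard : ℝ) ≤ ∏ i, ((S i).ncard : ℝ) := by
  have hfin : (Set.univ.pi S).Finite := Set.Finite.pi h
  refine ⟨hfin, ?_⟩
  have e : (Set.univ.pi S) ≃ (∀ i, S i) :=
    ⟨fun x i => ⟨x.1 i, x.2 i (Set.mem_univ i)⟩,
     fun f => ⟨fun i => (f i).1, fun i _ => (f i).2⟩,
     fun x => rfl, fun f => rfl⟩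
  have hcard : (Set.univ.pi S).ncard = ∏ i, (S i).ncard := by
    rw [← Nat.card_coe_set_eq, Nat.card_congr e, Nat.card_pi]
    exact Finset.prod_congr rfl fun i _ => Nat.card_coe_set_eq _
  rw [hcard]
  push_cast
  exact le_refl _

lemma aux_norm_bound (F : Type*) [Field F] [NumberField F] :
    ∃ Cn : ℝ, 1 ≤ Cn ∧ ∀ (z : 𝓞 F) (M : ℝ), 0 ≤ M →
      (∀ k, |((RingOfIntegers.basis F).repr z k : ℝ)| ≤ M) →
      |((Algebra.norm ℤ z : ℤ) : ℝ)| ≤ Cn * M ^ Module.finrank ℚ F := by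
  classical
  set ι := Module.Free.ChooseBasisIndex ℤ (𝓞 F) with hι
  set b := RingOfIntegers.basis F with hb
  have hcard : Fintype.card ι = Module.finrank ℚ F :=
    (Module.finrank_eq_card_chooseBasisIndex ℤ (𝓞 F)).symm.trans (RingOfIntegers.rank F)
  set d := Module.finrank ℚ F with hd
  set C1 : ℝ := 1 + ∑ i : ι, ∑ j : ι, ∑ k : ι, |((b.repr (b k * b j)) i : ℝ)| with hC1
  have hC1pos : 1 ≤ C1 := by
    have : (0:ℝ) ≤ ∑ i : ι, ∑ j : ι, ∑ k : ι, |((b.repr (b k * b j)) i : ℝ)| := by positivity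
    linarith
  refine ⟨(Nat.factorial d : ℝ) * C1 ^ d, ?_, ?_⟩
  · have h1 : (1:ℝ) ≤ (Nat.factorial d : ℝ) := by
      exact_mod_cast Nat.one_le_iff_ne_zero.2 (Nat.factorial_ne_zero d)
    have h2 : (1:ℝ) ≤ C1 ^ d := one_le_pow₀ hC1pos
    nlinarith
  · intro z M hM hrepr
    -- entry bound
    have hentry : ∀ i j : ι, |((Algebra.leftMulMatrix b z i j : ℤ) : ℝ)| ≤ C1 * M := by
      intro i j
      have hz : (z * b j : 𝓞 F) = ∑ k : ι, b.repr z k • (b k * b j) := by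
        conv_lhs => rw [← b.sum_repr z]
        rw [Finset.sum_mul]
        exact Finset.sum_congr rfl fun k _ => smul_mul_assoc _ _ _
      have hz2 : b.repr (z * b j) i = ∑ k : ι, b.repr z k * b.repr (b k * b j) i := by
        rw [hz, map_sum, Finset.sum_apply']
        exact Finset.sum_congr rfl fun k _ => by rw [map_smul, Finsupp.smul_apply, smul_eq_mul]
      rw [Algebra.leftMulMatrix_eq_repr_mul, hz2]
      push_cast
      calc |∑ k : ι, (b.repr z k : ℝ) * (b.repr (b k * b j) i : ℝ)|
          ≤ ∑ k : ι, |(b.repr z k : ℝ) * (b.repr (b k * b j) i : ℝ)| :=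
            Finset.abs_sum_le_sum_abs _ _
        _ ≤ ∑ k : ι, M * |(b.repr (b k * b j) i : ℝ)| := by
            refine Finset.sum_le_sum fun k _ => ?_
            rw [abs_mul]
            exact mul_le_mul_of_nonneg_right (hrepr k) (abs_nonneg _)
        _ = M * ∑ k : ι, |(b.repr (b k * b j) i : ℝ)| := by rw [Finset.mul_sum]
        _ ≤ M * C1 := by
            refine mul_le_mul_of_nonneg_left ?_ hM
            rw [hC1]
            have h2 : ∑ k : ι, |(b.repr (b k * b j) i : ℝ)| ≤
                ∑ i' : ι, ∑ j' : ι, ∑ k : ι, |((b.repr (b k * b j')) i' : ℝ)| := by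
              have hle1 : ∑ k : ι, |(b.repr (b k * b j) i : ℝ)| ≤
                  ∑ j' : ι, ∑ k : ι, |((b.repr (b k * b j')) i : ℝ)| :=
                Finset.single_le_sum (f := fun j' => ∑ k : ι, |((b.repr (b k * b j')) i : ℝ)|)
                  (fun _ _ => by positivity) (Finset.mem_univ j)
              refine hle1.trans ?_
              exact Finset.single_le_sum
                (f := fun i' => ∑ j' : ι, ∑ k : ι, |((b.repr (b k * b j')) i' : ℝ)|)
                (fun _ _ => by positivity) (Finset.mem_univ i)
            linarith
        _ = C1 * M := mul_comm _ _
    -- determinant bound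
    have hdet := Matrix.det_le (A := (Algebra.leftMulMatrix b z).map (Int.cast : ℤ → ℝ))
      (abv := AbsoluteValue.abs) (x := C1 * M) (fun i j => hentry i j)
    rw [Algebra.norm_eq_matrix_det b z]
    have hmap : ((Algebra.leftMulMatrix b z).map (Int.cast : ℤ → ℝ)).det
        = (((Algebra.leftMulMatrix b z).det : ℤ) : ℝ) := by
      exact ((Int.castRingHom ℝ).map_det _).symm
    rw [← hmap]
    calc |((Algebra.leftMulMatrix b z).map (Int.cast : ℤ → ℝ)).det|
        ≤ Nat.factorial (Fintype.card ι) • (C1 * M) ^ Fintype.card ι := hdet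
      _ = (Nat.factorial d : ℝ) * (C1 * M) ^ d := by rw [hcard, nsmul_eq_mul]
      _ = (Nat.factorial d : ℝ) * C1 ^ d * M ^ d := by rw [mul_pow]; ring

set_option maxHeartbeats 1000000 in
lemma aux_main (F : Type*) [Field F] [NumberField F]
    (Λ : FractionalIdeal (𝓞 F)⁰ F)
    (D : Set (F ⊗[ℚ] ℝ)) (hD : IsCompact D) (ε : ℝ) (hε : 0 < ε) :
    ∃ K : ℝ, 1 ≤ K ∧ ∀ a : ℝ, ε ≤ a → ∀ 𝔫 : Ideal (𝓞 F), 𝔫 ≠ 0 →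
      {x : F | x ⊗ₜ[ℚ] (1 : ℝ) ∈ a • D ∧
        x ∈ (((𝔫 : FractionalIdeal (𝓞 F)⁰ F) * Λ : FractionalIdeal (𝓞 F)⁰ F) :
          Submodule (𝓞 F) F)}.Finite ∧
      ({x : F | x ⊗ₜ[ℚ] (1 : ℝ) ∈ a • D ∧
        x ∈ (((𝔫 : FractionalIdeal (𝓞 F)⁰ F) * Λ : FractionalIdeal (𝓞 F)⁰ F) :
          Submodule (𝓞 F) F)}.ncard : ℝ) ≤ K * a ^ Module.finrank ℚ F ∧
      ({x : F | (x ⊗ₜ[ℚ] (1 : ℝ) ∈ a • D ∧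
        x ∈ (((𝔫 : FractionalIdeal (𝓞 F)⁰ F) * Λ : FractionalIdeal (𝓞 F)⁰ F) :
          Submodule (𝓞 F) F)) ∧ x ≠ 0}.ncard : ℝ) ≤
        K * a ^ Module.finrank ℚ F / (Ideal.absNorm 𝔫 : ℝ) := by
  classical
  obtain ⟨Cn, hCn1, hCn⟩ := aux_norm_bound F
  have hCn0 : (0:ℝ) < Cn := lt_of_lt_of_le one_pos hCn1
  have hd0 : 0 < Module.finrank ℚ F := Module.finrank_pos
  set d := Module.finrank ℚ F with hd
  have hcard : Fintype.card (Module.Free.ChooseBasisIndex ℤ (𝓞 F)) = d :=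
    (Module.finrank_eq_card_chooseBasisIndex ℤ (𝓞 F)).symm.trans (RingOfIntegers.rank F)
  -- the denominator
  set c : 𝓞 F := (Λ.den : 𝓞 F) with hc
  have hc0 : c ≠ 0 := nonZeroDivisors.coe_ne_zero Λ.den
  have hcF : algebraMap (𝓞 F) F c ≠ 0 := RingOfIntegers.coe_ne_zero_iff.2 hc0
  have hkey : ∀ (𝔫 : Ideal (𝓞 F)),
      ∀ x ∈ (((𝔫 : FractionalIdeal (𝓞 F)⁰ F) * Λ : FractionalIdeal (𝓞 F)⁰ F) :
        Submodule (𝓞 F) F),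
      ∃ z ∈ 𝔫, algebraMap (𝓞 F) F z = algebraMap (𝓞 F) F c * x := by
    intro 𝔫 x hx
    rw [FractionalIdeal.coe_mul] at hx
    refine Submodule.mul_induction_on hx ?_ ?_
    · intro m hm y hy
      rw [FractionalIdeal.mem_coe, FractionalIdeal.mem_coeIdeal] at hm
      obtain ⟨m', hm', rfl⟩ := hm
      have hy2 : Λ.den • y ∈ Submodule.map (Algebra.linearMap (𝓞 F) F) Λ.num := by
        rw [← FractionalIdeal.den_mul_self_eq_num]
        exact Submodule.smul_mem_pointwise_smul _ _ _ hy
      obtain ⟨z', _hz', hz'eq⟩ := hy2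
      refine ⟨m' * z', Ideal.mul_mem_right _ _ hm', ?_⟩
      have hsmul : Λ.den • y = algebraMap (𝓞 F) F c * y := by
        rw [Submonoid.smul_def, Algebra.smul_def]
      rw [map_mul]
      rw [Algebra.linearMap_apply] at hz'eq
      rw [hz'eq, hsmul]
      ring
    · rintro u v ⟨z1, hz1, e1⟩ ⟨z2, hz2, e2⟩
      exact ⟨z1 + z2, Ideal.add_mem _ hz1 hz2, by rw [map_add, e1, e2, mul_add]⟩
  -- coordinate functionals
  set g : Module.Free.ChooseBasisIndex ℤ (𝓞 F) → ((F ⊗[ℚ] ℝ) →ₗ[ℝ] ℝ) := fun k =>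
    ((integralBasis F).baseChange ℝ).coord k ∘ₗ
      (LinearMap.baseChange ℝ (LinearMap.mulLeft ℚ (algebraMap (𝓞 F) F c))) ∘ₗ
      (tensorCommEquiv F).toLinearMap with hg
  have hgval : ∀ (x : F) k, g k (x ⊗ₜ[ℚ] (1:ℝ)) =
      ((integralBasis F).repr (algebraMap (𝓞 F) F c * x) k : ℝ) := by
    intro x k
    simp [hg, tensorCommEquiv, Module.Basis.coord_apply, Module.Basis.baseChange_repr_tmul,
      Rat.smul_one_eq_cast]
  -- bound on D
  have hcont : Continuous (fun y : F ⊗[ℚ] ℝ => fun k => g k y) :=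
    continuous_pi fun k => IsModuleTopology.continuous_of_linearMap _
  obtain ⟨R0, hR0⟩ := hD.exists_bound_of_continuousOn hcont.continuousOn
  set R := max R0 1 with hR
  have hR1 : (1:ℝ) ≤ R := le_max_right _ _
  have hRpos : (0:ℝ) < R := lt_of_lt_of_le one_pos hR1
  have hRb : ∀ y ∈ D, ∀ k, |g k y| ≤ R := by
    intro y hy k
    have h1 : |g k y| ≤ ‖fun k => g k y‖ := by
      have := norm_le_pi_norm (fun k => g k y) k
      simpa using this
    exact h1.trans ((hR0 y hy).trans (le_max_left _ _))
  refine ⟨max ((2*R + 2/ε)^d) ((4*R)^d * Cn), le_trans ?_ (le_max_left _ _), ?_⟩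
  · have h1 : (1:ℝ) ≤ 2*R + 2/ε := by
      have h2 : (0:ℝ) < 2/ε := by positivity
      linarith
    exact one_le_pow₀ h1
  intro a ha 𝔫 h𝔫
  have ha0 : 0 < a := lt_of_lt_of_le hε ha
  have hN0 : 0 < ((Ideal.absNorm 𝔫 : ℕ) : ℝ) := by
    have h1 : Ideal.absNorm 𝔫 ≠ 0 := by
      rw [Ne, Ideal.absNorm_eq_zero_iff]
      simpa [Submodule.zero_eq_bot] using h𝔫
    exact_mod_cast Nat.pos_of_ne_zero h1
  set N : ℝ := ((Ideal.absNorm 𝔫 : ℕ) : ℝ) with hNdef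
  set δ : ℝ := max 1 ((N / Cn) ^ ((d:ℝ)⁻¹)) with hδdef
  have hδ1 : (1:ℝ) ≤ δ := le_max_left _ _
  have hδ0 : (0:ℝ) < δ := lt_of_lt_of_le one_pos hδ1
  have hδd : N / Cn ≤ δ ^ d := by
    have hrpowd : ((N / Cn) ^ ((d:ℝ)⁻¹)) ^ d = N / Cn := by
      rw [← Real.rpow_natCast ((N / Cn) ^ ((d:ℝ)⁻¹)) d, ← Real.rpow_mul (by positivity),
        inv_mul_cancel₀ (by exact_mod_cast hd0.ne'), Real.rpow_one]
    calc N / Cn = ((N / Cn) ^ ((d:ℝ)⁻¹)) ^ d := hrpowd.symm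
      _ ≤ δ ^ d := pow_le_pow_left₀ (by positivity) (le_max_right _ _) d
  set f : F → Module.Free.ChooseBasisIndex ℤ (𝓞 F) → ℝ :=
    fun x k => ((integralBasis F).repr (algebraMap (𝓞 F) F c * x) k : ℝ) with hf
  set S : Set F := {x : F | x ⊗ₜ[ℚ] (1 : ℝ) ∈ a • D ∧
      x ∈ (((𝔫 : FractionalIdeal (𝓞 F)⁰ F) * Λ : FractionalIdeal (𝓞 F)⁰ F) :
        Submodule (𝓞 F) F)} with hS
  -- max-coordinate lemma
  have hmax : ∀ z : 𝓞 F, z ∈ 𝔫 → z ≠ 0 → ∃ k₀,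
      (∀ k, |((RingOfIntegers.basis F).repr z k : ℝ)|
        ≤ |((RingOfIntegers.basis F).repr z k₀ : ℝ)|)
      ∧ δ ≤ |((RingOfIntegers.basis F).repr z k₀ : ℝ)| := by
    intro z hz hzne
    have hne : Nonempty (Module.Free.ChooseBasisIndex ℤ (𝓞 F)) := by
      rw [← Fintype.card_pos_iff, hcard]; exact hd0
    obtain ⟨k₀, _, hk₀⟩ := Finset.exists_max_image Finset.univ
      (fun k => |((RingOfIntegers.basis F).repr z k : ℝ)|) Finset.univ_nonempty
    have hk : ∀ k, |((RingOfIntegers.basis F).repr z k : ℝ)|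
        ≤ |((RingOfIntegers.basis F).repr z k₀ : ℝ)| :=
      fun k => hk₀ k (Finset.mem_univ k)
    set Mz := |((RingOfIntegers.basis F).repr z k₀ : ℝ)| with hMzdef
    have hMz1 : (1:ℝ) ≤ Mz := by
      obtain ⟨k1, hk1⟩ : ∃ k1, (RingOfIntegers.basis F).repr z k1 ≠ 0 := by
        by_contra hcon
        push_neg at hcon
        apply hzne
        have h2 : (RingOfIntegers.basis F).repr z = 0 := Finsupp.ext hcon
        have h3 := congrArg (RingOfIntegers.basis F).repr.symm h2
        simpa using h3
      have h1 : (1:ℝ) ≤ |((RingOfIntegers.basis F).repr z k1 : ℝ)| := by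
        have h2 : 1 ≤ |(RingOfIntegers.basis F).repr z k1| := Int.one_le_abs hk1
        exact_mod_cast h2
      exact h1.trans (hk k1)
    have hMz0 : (0:ℝ) ≤ Mz := le_trans zero_le_one hMz1
    have hNle : N ≤ Cn * Mz ^ d := by
      have hdvd : ((Ideal.absNorm 𝔫 : ℕ) : ℤ) ∣ Algebra.norm ℤ z :=
        Ideal.absNorm_dvd_norm_of_mem hz
      have hnz : Algebra.norm ℤ z ≠ 0 := by
        rw [Algebra.norm_ne_zero_iff]; exact hzne
      have h2 : ((Ideal.absNorm 𝔫 : ℕ) : ℤ) ≤ |Algebra.norm ℤ z| :=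
        Int.le_of_dvd (abs_pos.2 hnz) ((dvd_abs _ _).2 hdvd)
      have h3 : N ≤ |((Algebra.norm ℤ z : ℤ) : ℝ)| := by
        rw [hNdef, ← Int.cast_abs]
        exact_mod_cast h2
      exact h3.trans (hCn z Mz hMz0 hk)
    refine ⟨k₀, hk, ?_⟩
    refine max_le hMz1 ?_
    have h2 : N / Cn ≤ Mz ^ d := (div_le_iff₀ hCn0).2 (by linarith)
    calc (N / Cn) ^ ((d:ℝ)⁻¹) ≤ (Mz ^ d) ^ ((d:ℝ)⁻¹) :=
        Real.rpow_le_rpow (by positivity) h2 (by positivity)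
      _ = Mz := by
        rw [← Real.rpow_natCast Mz d, ← Real.rpow_mul hMz0,
          mul_inv_cancel₀ (by exact_mod_cast hd0.ne'), Real.rpow_one]
  -- coordinate description of differences
  have hfd : ∀ x y : F, ∀ z : 𝓞 F, algebraMap (𝓞 F) F z
      = algebraMap (𝓞 F) F c * x - algebraMap (𝓞 F) F c * y →
      ∀ k, f x k - f y k = ((RingOfIntegers.basis F).repr z k : ℝ) := by
    intro x y z hz k
    have h1 : (integralBasis F).repr (algebraMap (𝓞 F) F c * x) k
        - (integralBasis F).repr (algebraMap (𝓞 F) F c * y) k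
        = ((RingOfIntegers.basis F).repr z k : ℚ) := by
      rw [← Finsupp.sub_apply, ← map_sub, ← hz, integralBasis_repr_apply]
      simp
    simp only [hf]
    exact_mod_cast h1
  -- bound on f over S
  have hbound : ∀ x ∈ S, ∀ k, |f x k| ≤ a * R := by
    intro x hx k
    obtain ⟨w, hw, hwx⟩ := hx.1
    have h1 : f x k = g k (x ⊗ₜ[ℚ] (1:ℝ)) := (hgval x k).symm
    rw [h1, ← hwx, map_smul, smul_eq_mul, abs_mul, abs_of_pos ha0]
    exact mul_le_mul_of_nonneg_left (hRb w hw k) ha0.le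
  -- separation
  have hsep : ∀ x ∈ S, ∀ y ∈ S, x ≠ y → ∃ k, δ ≤ |f x k - f y k| := by
    intro x hx y hy hxy
    obtain ⟨zx, hzx, ex⟩ := hkey 𝔫 x hx.2
    obtain ⟨zy, hzy, ey⟩ := hkey 𝔫 y hy.2
    have hzsub : algebraMap (𝓞 F) F (zx - zy)
        = algebraMap (𝓞 F) F c * x - algebraMap (𝓞 F) F c * y := by
      rw [map_sub, ex, ey]
    have hzne : zx - zy ≠ 0 := by
      intro h0
      apply hxy
      rw [h0, map_zero] at hzsub
      exact mul_left_cancel₀ hcF (sub_eq_zero.1 hzsub.symm)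
    obtain ⟨k₀, _, hδle⟩ := hmax (zx - zy) (Ideal.sub_mem _ hzx hzy) hzne
    refine ⟨k₀, ?_⟩
    rw [hfd x y (zx - zy) hzsub k₀]
    exact hδle
  -- grid count
  obtain ⟨hfin, hcount⟩ := aux_grid_count S f δ (a * R) hδ1 (by positivity) hbound hsep
  rw [hcard] at hcount
  refine ⟨hfin, ?_, ?_⟩
  · have h1 : 2 * (a * R) / δ + 2 ≤ (2 * R + 2/ε) * a := by
      have h2 : 2 * (a * R) / δ ≤ 2 * (a * R) := div_le_self (by positivity) hδ1
      have h3 : (2:ℝ) ≤ 2/ε * a := by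
        rw [div_mul_eq_mul_div, le_div_iff₀ hε]
        nlinarith
      nlinarith
    calc (S.ncard : ℝ) ≤ (2 * (a * R) / δ + 2) ^ d := hcount
      _ ≤ ((2*R + 2/ε) * a) ^ d := pow_le_pow_left₀ (by positivity) h1 d
      _ = (2*R + 2/ε)^d * a^d := mul_pow _ _ _
      _ ≤ max ((2*R + 2/ε)^d) ((4*R)^d * Cn) * a^d := by
          have := le_max_left ((2*R + 2/ε)^d) ((4*R)^d * Cn)
          nlinarith [pow_pos ha0 d]
  · set S' : Set F := {x : F | (x ⊗ₜ[ℚ] (1 : ℝ) ∈ a • D ∧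
        x ∈ (((𝔫 : FractionalIdeal (𝓞 F)⁰ F) * Λ : FractionalIdeal (𝓞 F)⁰ F) :
          Submodule (𝓞 F) F)) ∧ x ≠ 0} with hS'
    have hsub : S' ⊆ S := fun x hx => hx.1
    rcases Set.eq_empty_or_nonempty S' with hemp | ⟨x₀, hx₀⟩
    · rw [hemp, Set.ncard_empty]
      push_cast
      positivity
    · obtain ⟨z₀, hz₀, e₀⟩ := hkey 𝔫 x₀ hx₀.1.2
      have hz₀ne : z₀ ≠ 0 := by
        intro h0
        apply hx₀.2
        rw [h0, map_zero] at e₀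
        rcases mul_eq_zero.1 e₀.symm with h | h
        · exact absurd h hcF
        · exact h
      obtain ⟨k₀, _, hδle⟩ := hmax z₀ hz₀ hz₀ne
      have hfx₀ : f x₀ k₀ - f 0 k₀ = ((RingOfIntegers.basis F).repr z₀ k₀ : ℝ) :=
        hfd x₀ 0 z₀ (by rw [mul_zero, sub_zero]; exact e₀) k₀
      have hf0 : f 0 k₀ = 0 := by simp [hf]
      have hδaR : δ ≤ a * R := by
        have h1 : |f x₀ k₀| = |((RingOfIntegers.basis F).repr z₀ k₀ : ℝ)| := by
          rw [← hfx₀, hf0, sub_zero]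
        calc δ ≤ |((RingOfIntegers.basis F).repr z₀ k₀ : ℝ)| := hδle
          _ = |f x₀ k₀| := h1.symm
          _ ≤ a * R := hbound x₀ (hsub hx₀) k₀
      have h2 : 2 * (a * R) / δ + 2 ≤ 4 * (a * R) / δ := by
        have h3 : (1:ℝ) ≤ (a * R)/δ := (one_le_div hδ0).2 hδaR
        have h4 : 4 * (a * R)/δ = 2 * (a * R)/δ + 2 * ((a * R)/δ) := by ring
        linarith
      have hcount' : (S'.ncard : ℝ) ≤ (4 * (a * R) / δ) ^ d := by
        calc (S'.ncard : ℝ) ≤ (S.ncard : ℝ) := Nat.cast_le.2 (Set.ncard_le_ncard hsub hfin)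
          _ ≤ (2 * (a * R) / δ + 2) ^ d := hcount
          _ ≤ _ := pow_le_pow_left₀ (by positivity) h2 d
      have h5 : (4 * (a * R) / δ) ^ d = (4*R)^d * a^d / δ^d := by
        rw [div_pow]
        congr 1
        rw [← mul_pow]
        congr 1
        ring
      have h7 : N ≤ Cn * δ^d := by rw [div_le_iff₀ hCn0] at hδd; linarith
      have h6 : (4*R)^d * a^d / δ^d ≤ (4*R)^d * Cn * a^d / N := by
        rw [div_le_div_iff₀ (by positivity) hN0]
        have h8 : ((4*R)^d * a^d) * N ≤ ((4*R)^d * a^d) * (Cn * δ^d) :=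
          mul_le_mul_of_nonneg_left h7 (by positivity)
        calc (4*R)^d * a^d * N = ((4*R)^d * a^d) * N := by ring
          _ ≤ ((4*R)^d * a^d) * (Cn * δ^d) := h8
          _ = (4*R)^d * Cn * a^d * δ^d := by ring
      calc (S'.ncard : ℝ) ≤ (4 * (a * R) / δ) ^ d := hcount'
        _ = (4*R)^d * a^d / δ^d := h5
        _ ≤ (4*R)^d * Cn * a^d / N := h6
        _ ≤ max ((2*R + 2/ε)^d) ((4*R)^d * Cn) * a^d / N := by
            gcongr
            exact le_max_right _ _

lemma aux_ncard_iUnion_le {m : ℕ} {α : Type*} (s : Fin m → Set α) (h : ∀ i, (s i).Finite) :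
    (⋃ i, s i).ncard ≤ ∑ i, (s i).ncard := by
  classical
  have he : (⋃ i, s i) = ↑(Finset.univ.biUnion fun i => (h i).toFinset) := by
    ext x; simp [Set.mem_iUnion]
  rw [he, Set.ncard_coe_finset]
  calc (Finset.univ.biUnion fun i => (h i).toFinset).card
      ≤ ∑ i, ((h i).toFinset).card := Finset.card_biUnion_le
    _ = ∑ i, (s i).ncard :=
        Finset.sum_congr rfl fun i _ => (Set.ncard_eq_toFinset_card _ (h i)).symm

set_option maxHeartbeats 1000000 in
/-- Let `F` be a number field of degree `d`, `Λ_1, …, Λ_n` fractional ideals of `F`,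
`D_1, …, D_n` compact subsets of `F_∞ = F ⊗_ℚ ℝ`, and `ε > 0`. Then there is `C > 0`
such that for all reals `a_1, …, a_n ≥ ε` and every nonzero integral ideal `𝔫` of `𝒪_F`,
the number of tuples `(x_1, …, x_n) ∈ F^n` with `x_i ∈ a_i•D_i ∩ 𝔫Λ_i` for every `i`
(inside `F_∞`, with `F` embedded via `x ↦ x ⊗ 1`) and `(x_1, …, x_n) ≠ 0` is at most
`C · (∏ a_i ^ d) / N(𝔫)`. -/
theorem stmt_3 (F : Type*) [Field F] [NumberField F] (n : ℕ)
    (Λ : Fin n → FractionalIdeal (𝓞 F)⁰ F) (hΛ : ∀ i, Λ i ≠ 0)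
    (D : Fin n → Set (F ⊗[ℚ] ℝ)) (hD : ∀ i, IsCompact (D i))
    (ε : ℝ) (hε : 0 < ε) :
    ∃ C : ℝ, 0 < C ∧ ∀ a : Fin n → ℝ, (∀ i, ε ≤ a i) → ∀ 𝔫 : Ideal (𝓞 F), 𝔫 ≠ 0 →
      {x : Fin n → F |
          (∀ i, (x i) ⊗ₜ[ℚ] (1 : ℝ) ∈ a i • D i ∧
            x i ∈ (((𝔫 : FractionalIdeal (𝓞 F)⁰ F) * Λ i : FractionalIdeal (𝓞 F)⁰ F) :
              Submodule (𝓞 F) F)) ∧ x ≠ 0}.Finite ∧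
      ({x : Fin n → F |
          (∀ i, (x i) ⊗ₜ[ℚ] (1 : ℝ) ∈ a i • D i ∧
            x i ∈ (((𝔫 : FractionalIdeal (𝓞 F)⁰ F) * Λ i : FractionalIdeal (𝓞 F)⁰ F) :
              Submodule (𝓞 F) F)) ∧ x ≠ 0}.ncard : ℝ) ≤
        C * (∏ i, a i ^ (Module.finrank ℚ F)) / (Ideal.absNorm 𝔫 : ℝ) := by
  classical
  choose K hK1 hK using fun i => aux_main F (Λ i) (D i) (hD i) ε hε
  have hK0 : ∀ i, (0:ℝ) < K i := fun i => lt_of_lt_of_le one_pos (hK1 i)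
  refine ⟨max 1 ((n:ℝ) * ∏ i, K i), lt_of_lt_of_le one_pos (le_max_left _ _), ?_⟩
  intro a ha 𝔫 h𝔫
  set d := Module.finrank ℚ F with hd
  have ha0 : ∀ i, 0 < a i := fun i => lt_of_lt_of_le hε (ha i)
  have hN0 : (0:ℝ) < ((Ideal.absNorm 𝔫 : ℕ) : ℝ) := by
    have h1 : Ideal.absNorm 𝔫 ≠ 0 := by
      rw [Ne, Ideal.absNorm_eq_zero_iff]
      simpa [Submodule.zero_eq_bot] using h𝔫
    exact_mod_cast Nat.pos_of_ne_zero h1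
  set S : Fin n → Set F := fun i => {x : F | x ⊗ₜ[ℚ] (1 : ℝ) ∈ a i • D i ∧
      x ∈ (((𝔫 : FractionalIdeal (𝓞 F)⁰ F) * Λ i : FractionalIdeal (𝓞 F)⁰ F) :
        Submodule (𝓞 F) F)} with hS
  have hfacts := fun i => hK i (a i) (ha i) 𝔫 h𝔫
  have hSfin : ∀ i, (S i).Finite := fun i => (hfacts i).1
  have hS1 : ∀ i, ((S i).ncard : ℝ) ≤ K i * a i ^ d := fun i => (hfacts i).2.1
  have hS2 : ∀ i, (({y : F | y ∈ S i ∧ y ≠ 0}).ncard : ℝ) ≤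
      K i * a i ^ d / ((Ideal.absNorm 𝔫 : ℕ) : ℝ) := fun i => (hfacts i).2.2
  set S' : Fin n → Fin n → Set F := fun j i =>
    if i = j then {y : F | y ∈ S i ∧ y ≠ 0} else S i with hS'
  have hS'fin : ∀ j i, (S' j i).Finite := by
    intro j i
    by_cases h : i = j
    · simp only [hS', if_pos h]
      exact (hSfin i).subset (fun y hy => hy.1)
    · simp only [hS', if_neg h]
      exact hSfin i
  have hsubset : {x : Fin n → F |
      (∀ i, (x i) ⊗ₜ[ℚ] (1 : ℝ) ∈ a i • D i ∧
        x i ∈ (((𝔫 : FractionalIdeal (𝓞 F)⁰ F) * Λ i : FractionalIdeal (𝓞 F)⁰ F) :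
          Submodule (𝓞 F) F)) ∧ x ≠ 0} ⊆ Set.univ.pi S := fun x hx i _ => hx.1 i
  have hTfin : {x : Fin n → F |
      (∀ i, (x i) ⊗ₜ[ℚ] (1 : ℝ) ∈ a i • D i ∧
        x i ∈ (((𝔫 : FractionalIdeal (𝓞 F)⁰ F) * Λ i : FractionalIdeal (𝓞 F)⁰ F) :
          Submodule (𝓞 F) F)) ∧ x ≠ 0}.Finite :=
    (Set.Finite.pi hSfin).subset hsubset
  refine ⟨hTfin, ?_⟩
  have hunion : {x : Fin n → F |
      (∀ i, (x i) ⊗ₜ[ℚ] (1 : ℝ) ∈ a i • D i ∧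
        x i ∈ (((𝔫 : FractionalIdeal (𝓞 F)⁰ F) * Λ i : FractionalIdeal (𝓞 F)⁰ F) :
          Submodule (𝓞 F) F)) ∧ x ≠ 0} ⊆ ⋃ j, Set.univ.pi (S' j) := by
    rintro x ⟨hx1, hx2⟩
    obtain ⟨j, hj⟩ := Function.ne_iff.1 hx2
    refine Set.mem_iUnion.2 ⟨j, fun i _ => ?_⟩
    by_cases h : i = j
    · subst h
      simp only [hS', if_pos rfl]
      exact ⟨hx1 i, hj⟩
    · simp only [hS', if_neg h]
      exact hx1 i
  have hUfin : ∀ j, (Set.univ.pi (S' j)).Finite := fun j => Set.Finite.pi (hS'fin j)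
  have hprod : ∀ j, ((Set.univ.pi (S' j)).ncard : ℝ) ≤
      (∏ i, K i) * (∏ i, a i ^ d) / ((Ideal.absNorm 𝔫 : ℕ) : ℝ) := by
    intro j
    obtain ⟨_, hlej⟩ := aux_pi_card (S' j) (hS'fin j)
    refine hlej.trans ?_
    have hterm : ∀ i, ((S' j i).ncard : ℝ) ≤
        (if i = j then K i * a i ^ d / ((Ideal.absNorm 𝔫 : ℕ) : ℝ) else K i * a i ^ d) := by
      intro i
      by_cases h : i = j
      · simp only [hS', if_pos h]
        exact hS2 i
      · simp only [hS', if_neg h]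
        exact hS1 i
    calc ∏ i, ((S' j i).ncard : ℝ)
        ≤ ∏ i, (if i = j then K i * a i ^ d / ((Ideal.absNorm 𝔫 : ℕ) : ℝ)
            else K i * a i ^ d) :=
          Finset.prod_le_prod (fun i _ => by positivity) (fun i _ => hterm i)
      _ = (K j * a j ^ d / ((Ideal.absNorm 𝔫 : ℕ) : ℝ)) *
            ∏ i ∈ Finset.univ.erase j, (K i * a i ^ d) := by
          rw [← Finset.mul_prod_erase Finset.univ _ (Finset.mem_univ j), if_pos rfl]
          congr 1
          exact Finset.prod_congr rfl fun i hi => if_neg (Finset.ne_of_mem_erase hi)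
      _ = (∏ i, (K i * a i ^ d)) / ((Ideal.absNorm 𝔫 : ℕ) : ℝ) := by
          rw [← Finset.mul_prod_erase Finset.univ (fun i => K i * a i ^ d)
            (Finset.mem_univ j)]
          ring
      _ = (∏ i, K i) * (∏ i, a i ^ d) / ((Ideal.absNorm 𝔫 : ℕ) : ℝ) := by
          rw [Finset.prod_mul_distrib]
  calc ({x : Fin n → F |
      (∀ i, (x i) ⊗ₜ[ℚ] (1 : ℝ) ∈ a i • D i ∧
        x i ∈ (((𝔫 : FractionalIdeal (𝓞 F)⁰ F) * Λ i : FractionalIdeal (𝓞 F)⁰ F) :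
          Submodule (𝓞 F) F)) ∧ x ≠ 0}.ncard : ℝ)
      ≤ ((⋃ j, Set.univ.pi (S' j)).ncard : ℝ) :=
        Nat.cast_le.2 (Set.ncard_le_ncard hunion (Set.finite_iUnion hUfin))
    _ ≤ ∑ j, ((Set.univ.pi (S' j)).ncard : ℝ) := by
        have := aux_ncard_iUnion_le (fun j => Set.univ.pi (S' j)) hUfin
        push_cast
        exact_mod_cast this
    _ ≤ ∑ _j : Fin n, (∏ i, K i) * (∏ i, a i ^ d) / ((Ideal.absNorm 𝔫 : ℕ) : ℝ) :=
        Finset.sum_le_sum fun j _ => hprod j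
    _ = (n:ℝ) * ((∏ i, K i) * (∏ i, a i ^ d) / ((Ideal.absNorm 𝔫 : ℕ) : ℝ)) := by
        rw [Finset.sum_const, Finset.card_univ, Fintype.card_fin, nsmul_eq_mul]
    _ = ((n:ℝ) * ∏ i, K i) * (∏ i, a i ^ d) / ((Ideal.absNorm 𝔫 : ℕ) : ℝ) := by
        ring
    _ ≤ max 1 ((n:ℝ) * ∏ i, K i) * (∏ i, a i ^ d) / ((Ideal.absNorm 𝔫 : ℕ) : ℝ) := by
        have h2 : (0:ℝ) ≤ ∏ i, a i ^ d :=
          Finset.prod_nonneg fun i _ => pow_nonneg (ha0 i).le _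
        have h1 : (n:ℝ) * ∏ i, K i ≤ max 1 ((n:ℝ) * ∏ i, K i) := le_max_right _ _
        gcongr
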